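/- Let A: X → X* be continuous, linear, and monotone. Then the Fenchel conjugate of the Fitzpatrick function of A satisfies, for every (x,x*) ∈ X×X*: F_A*(x*,x) = ι_{gra A}(x,x*) + ⟨x,Ax⟩, i.e. F_A*(x*,x) = ⟨x,Ax⟩ if x* = Ax, and F_A*(x*,x) = +∞ otherwise. -/

import Mathlib

noncomputable section
open scoped Classical
open Filter Topology

/-- The Fenchel conjugate of `F : X × X* → (-∞,+∞]`, as a function on `X* × X`:
`F*(x*,x) = sup_{(y,y*)} (⟨y,x*⟩ + ⟨x,y*⟩ - F(y,y*))`. -/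
def conj2 {X : Type*} [NormedAddCommGroup X] [NormedSpace ℝ X]
    (F : X × (X →L[ℝ] ℝ) → EReal) : (X →L[ℝ] ℝ) × X → EReal :=
  fun p => ⨆ q : X × (X →L[ℝ] ℝ), ((p.1 q.1 + q.2 p.2 : ℝ) : EReal) - F q

/-- `F` is autoconjugate: `F*(x*,x) = F(x,x*)` for all `(x,x*)`. -/
def Autoconjugate {X : Type*} [NormedAddCommGroup X] [NormedSpace ℝ X]
    (F : X × (X →L[ℝ] ℝ) → EReal) : Prop :=
  ∀ (x : X) (x' : X →L[ℝ] ℝ), conj2 F (x', x) = F (x, x')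

/-- `F` is a representer for the set-valued operator `A : X ⇉ X*`:
`gra A = {(x,x*) : F(x,x*) = ⟨x,x*⟩}`. -/
def IsRepresenter {X : Type*} [NormedAddCommGroup X] [NormedSpace ℝ X]
    (F : X × (X →L[ℝ] ℝ) → EReal) (A : X → Set (X →L[ℝ] ℝ)) : Prop :=
  ∀ (x : X) (x' : X →L[ℝ] ℝ), x' ∈ A x ↔ F (x, x') = ((x' x : ℝ) : EReal)

/-- A set-valued operator `A : X ⇉ X*` is monotone. -/
def MonotoneOp {X : Type*} [NormedAddCommGroup X] [NormedSpace ℝ X]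
    (A : X → Set (X →L[ℝ] ℝ)) : Prop :=
  ∀ ⦃x y : X⦄ ⦃x' y' : X →L[ℝ] ℝ⦄, x' ∈ A x → y' ∈ A y → 0 ≤ (x' - y') (x - y)

/-- A set-valued operator is maximal monotone if it is monotone and admits no proper
monotone extension (in the sense of graph inclusion). -/
def MaximalMonotoneOp {X : Type*} [NormedAddCommGroup X] [NormedSpace ℝ X]
    (A : X → Set (X →L[ℝ] ℝ)) : Prop :=
  MonotoneOp A ∧ ∀ B : X → Set (X →L[ℝ] ℝ), MonotoneOp B → (∀ x, A x ⊆ B x) → B = A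

/-- The quadratic function `q_A(x) = ½⟨x,Ax⟩` associated with a continuous linear
`A : X → X*`. -/
def qF {X : Type*} [NormedAddCommGroup X] [NormedSpace ℝ X]
    (A : X →L[ℝ] X →L[ℝ] ℝ) : X → ℝ :=
  fun x => (1 / 2) * A x x

/-- The Fenchel conjugate of a real-valued function `φ : X → ℝ`, as an `EReal`-valued
function on `X*`: `φ*(x*) = sup_y (⟨y,x*⟩ - φ(y))`. -/
def legendre {X : Type*} [NormedAddCommGroup X] [NormedSpace ℝ X]
    (φ : X → ℝ) : (X →L[ℝ] ℝ) → EReal :=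
  fun x' => ⨆ y : X, ((x' y - φ y : ℝ) : EReal)

/-- The symmetric part `A₊ = ½A + ½A*` of a continuous linear `A : X → X*`, where the
adjoint (restricted to `X`) is `A.flip`. -/
def symPart {X : Type*} [NormedAddCommGroup X] [NormedSpace ℝ X]
    (A : X →L[ℝ] X →L[ℝ] ℝ) : X →L[ℝ] X →L[ℝ] ℝ :=
  (1 / 2 : ℝ) • (A + A.flip)

/-- The antisymmetric part `A∘ = ½A - ½A*` of a continuous linear `A : X → X*`. -/
def antiPart {X : Type*} [NormedAddCommGroup X] [NormedSpace ℝ X]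
    (A : X →L[ℝ] X →L[ℝ] ℝ) : X →L[ℝ] X →L[ℝ] ℝ :=
  (1 / 2 : ℝ) • (A - A.flip)

/-- The Fitzpatrick function of a continuous linear `A : X → X*`:
`F_A(x,x*) = sup_y (⟨x,Ay⟩ + ⟨y,x*⟩ - ⟨y,Ay⟩)`. -/
def fitz {X : Type*} [NormedAddCommGroup X] [NormedSpace ℝ X]
    (A : X →L[ℝ] X →L[ℝ] ℝ) : X × (X →L[ℝ] ℝ) → EReal :=
  fun p => ⨆ y : X, ((A y p.1 + p.2 y - A y y : ℝ) : EReal)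

/-- second part of Proposition 2.3. For `A : X → X*` continuous, linear
and monotone: `F_A*(x*,x) = ι_{gra A}(x,x*) + ⟨x,Ax⟩`, i.e. it equals `⟨x,Ax⟩` when
`x* = Ax` and `+∞` otherwise. -/
lemma fitz_self {X : Type*} [NormedAddCommGroup X] [NormedSpace ℝ X]
    (A : X →L[ℝ] X →L[ℝ] ℝ) (hmono : ∀ x : X, 0 ≤ A x x) (x : X) :
    fitz A (x, A x) = ((A x x : ℝ) : EReal) := by
  apply le_antisymm
  · refine iSup_le fun z => ?_
    have h := hmono (x - z)
    simp only [map_sub, ContinuousLinearMap.sub_apply] at h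
    exact_mod_cast (by linarith : A z x + A x z - A z z ≤ A x x)
  · have := le_iSup (fun y : X => ((A y x + A x y - A y y : ℝ) : EReal)) x
    have e : ((A x x + A x x - A x x : ℝ) : EReal) = ((A x x : ℝ) : EReal) := by congr 1; ring
    rw [e] at this
    exact this

lemma fitz_neg {X : Type*} [NormedAddCommGroup X] [NormedSpace ℝ X]
    (A : X →L[ℝ] X →L[ℝ] ℝ) (hmono : ∀ x : X, 0 ≤ A x x) (y : X) :
    fitz A (y, -(A.flip y)) = (0 : EReal) := by
  apply le_antisymm
  · refine iSup_le fun z => ?_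
    have h := hmono z
    have hflip : A.flip y z = A z y := rfl
    have : (A z y + (-(A.flip y)) z - A z z : ℝ) ≤ 0 := by
      simp only [ContinuousLinearMap.neg_apply, hflip]; linarith
    exact_mod_cast this
  · refine le_trans ?_ (le_iSup (fun z : X => ((A z y + (-(A.flip y)) z - A z z : ℝ) : EReal)) 0)
    simp

theorem stmt3 {X : Type*} [NormedAddCommGroup X] [NormedSpace ℝ X] [CompleteSpace X]
    (hrefl : Function.Surjective (NormedSpace.inclusionInDoubleDual ℝ X))
    (A : X →L[ℝ] X →L[ℝ] ℝ)
    (hmono : ∀ x : X, 0 ≤ A x x) :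
    ∀ (x : X) (x' : X →L[ℝ] ℝ),
      conj2 (fitz A) (x', x) = if x' = A x then ((A x x : ℝ) : EReal) else ⊤ := by
  intro x x'
  by_cases hx : x' = A x
  · subst hx
    rw [if_pos rfl]
    apply le_antisymm
    · refine iSup_le fun q => ?_
      have hf : ((A x q.1 + q.2 x - A x x : ℝ) : EReal) ≤ fitz A q := by
        have := le_iSup (fun y : X => ((A y q.1 + q.2 y - A y y : ℝ) : EReal)) x
        exact this
      calc ((A x q.1 + q.2 x : ℝ) : EReal) - fitz A q
          ≤ ((A x q.1 + q.2 x : ℝ) : EReal) - ((A x q.1 + q.2 x - A x x : ℝ) : EReal) :=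
            EReal.sub_le_sub le_rfl hf
        _ = ((A x x : ℝ) : EReal) := by rw [← EReal.coe_sub]; norm_cast; ring
    · have := le_iSup (fun q : X × (X →L[ℝ] ℝ) =>
        ((A x q.1 + q.2 x : ℝ) : EReal) - fitz A q) (x, A x)
      calc ((A x x : ℝ) : EReal)
          = ((A x x + A x x : ℝ) : EReal) - fitz A (x, A x) := by
            rw [fitz_self A hmono, ← EReal.coe_sub]; norm_cast; ring
        _ ≤ _ := this
  · rw [if_neg hx]
    have hne : ∃ h : X, x' h ≠ A x h := by
      by_contra hc
      push_neg at hc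
      exact hx (ContinuousLinearMap.ext hc)
    obtain ⟨h, hh⟩ := hne
    set c : ℝ := x' h - A x h with hc
    have hc0 : c ≠ 0 := sub_ne_zero.mpr hh
    rw [EReal.eq_top_iff_forall_lt]
    intro r
    have key : ∀ s : ℝ, ((s * c : ℝ) : EReal) ≤ conj2 (fitz A) (x', x) := by
      intro s
      have := le_iSup (fun q : X × (X →L[ℝ] ℝ) =>
        ((x' q.1 + q.2 x : ℝ) : EReal) - fitz A q) (s • h, -(A.flip (s • h)))
      have hfz : fitz A (s • h, -(A.flip (s • h))) = 0 := fitz_neg A hmono _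
      have hval : (x' (s • h) + (-(A.flip (s • h))) x : ℝ) = s * c := by
        have hflip : A.flip h x = A x h := rfl
        simp only [ContinuousLinearMap.neg_apply, map_smul, ContinuousLinearMap.smul_apply,
          smul_eq_mul, hflip, hc]
        ring
      calc ((s * c : ℝ) : EReal) = ((x' (s • h) + (-(A.flip (s • h))) x : ℝ) : EReal)
             - fitz A (s • h, -(A.flip (s • h))) := by rw [hfz, sub_zero, hval]
        _ ≤ _ := this
    have hs : ∃ s : ℝ, r < s * c := by
      rcases lt_or_gt_of_ne hc0 with hneg | hpos
      · exact ⟨(|r| + 1) / c, by rw [div_mul_cancel₀ _ hc0]; cases abs_cases r <;> linarith⟩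
      · exact ⟨(|r| + 1) / c, by rw [div_mul_cancel₀ _ hc0]; cases abs_cases r <;> linarith⟩
    obtain ⟨s, hs⟩ := hs
    exact lt_of_lt_of_le (by exact_mod_cast hs) (key s)
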